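/- arXiv:2409.09539 — 2 statements merged into one kernel-verified Lean document; each statement's English description precedes it below -/
import Mathlib

section
/- Let u_{t+1} = u_t + (c-b)·m_t + (b - \bar{γ})·ξ_t and m_{t+1} = c·m_t + γ·ξ_t, where c = b(1-γ), \bar{γ} = 1-γ, ρ = bγ/(1-c) (assuming c ≠ 1), ν = b - \bar{γ} - ργ. Then for all t ≥ 1: u_t - ρ·m_t = u_0 - ρ·m_0 + ν·∑_{k=0}^{t-1} ξ_k. -/
theorem stmt_10 {n : ℕ} (b γ : ℝ) (hγ0 : 0 < γ) (hγ1 : γ < 1)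
    (c ρ ν : ℝ) (hc : c = b * (1 - γ)) (hc1 : c ≠ 1)
    (hρ : ρ = b * γ / (1 - c)) (hν : ν = b - (1 - γ) - ρ * γ)
    (u m ξ : ℕ → EuclideanSpace ℝ (Fin n))
    (hu : ∀ t, u (t + 1) = u t + (c - b) • m t + (b - (1 - γ)) • ξ t)
    (hm : ∀ t, m (t + 1) = c • m t + γ • ξ t) :
    ∀ t ≥ 1, u t - ρ • m t = u 0 - ρ • m 0 + ν • ∑ k ∈ Finset.range t, ξ k := by
  have hcne : (1 : ℝ) - c ≠ 0 := sub_ne_zero.mpr (Ne.symm hc1)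
  have key : ρ * (1 - c) = b * γ := by
    rw [hρ]; field_simp
  have hall : ∀ t, u t - ρ • m t = u 0 - ρ • m 0 + ν • ∑ k ∈ Finset.range t, ξ k := by
    intro t
    induction t with
    | zero => simp
    | succ t ih =>
      rw [hu, hm, Finset.sum_range_succ]
      have : u t + (c - b) • m t + (b - (1 - γ)) • ξ t -
          ρ • (c • m t + γ • ξ t) = (u t - ρ • m t) + ν • ξ t := by
        match_scalars <;> nlinarith [key, hν, hc]
      rw [this, ih, smul_add]
      abel
  intro t _; exact hall t
end

section
/- In the case b = 0 with z_{-1} deterministic, the limiting second moment of the adversary's error equals γ(1-γ)²‖x* - x_0‖² + (1-γ)‖z_{-1} - x_0 - (1-γ)(x* - x_0)‖² + γ(1-γ)·Q, where Q = ∑_t ‖ξ_t‖². -/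
open MeasureTheory ProbabilityTheory Filter

/-- Innovation-sharing protection analysis, case `b = 0` with deterministic `z₋₁`.
The messages are `ξ t = x (t+1) - x t` (with `ξ₋₁ = x 0`); the adversary intercepts
each message independently with probability `γ`.  With `b = 0` (and `b₀ = 1`), the
adversary's state is `z 0 = x 0` upon success and `zinit` (= `z₋₁`) upon failure, and
`z (t+1) = ξ t` upon success, `0` upon failure.  Its estimate of `x t` is
`x̂ t = ∑_{k ≤ t} z k` and the error is `e t = x̂ t - x t`. -/
theorem stmt_14 {n : ℕ} {Ω : Type*} [MeasurableSpace Ω] (P : Measure Ω)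
    [IsProbabilityMeasure P] (γ : ℝ) (hγ0 : 0 < γ) (hγ1 : γ < 1)
    (μ : ℕ → Ω → Bool) (hmeas : ∀ t, Measurable (μ t))
    (hindep : iIndepFun μ P)
    (hber : ∀ t, P {ω | μ t ω = true} = ENNReal.ofReal γ)
    (x : ℕ → EuclideanSpace ℝ (Fin n)) (xstar : EuclideanSpace ℝ (Fin n))
    (hx : Tendsto x atTop (nhds xstar))
    (Q : ℝ) (hQ : HasSum (fun t => ‖x (t + 1) - x t‖ ^ 2) Q)
    (zinit : EuclideanSpace ℝ (Fin n))
    (z : ℕ → Ω → EuclideanSpace ℝ (Fin n))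
    (hz0 : ∀ ω, z 0 ω = if μ 0 ω then x 0 else zinit)
    (hz : ∀ t ω, z (t + 1) ω = if μ (t + 1) ω then x (t + 1) - x t else 0)
    (e : ℕ → Ω → EuclideanSpace ℝ (Fin n))
    (he : ∀ t ω, e t ω = (∑ k ∈ Finset.range (t + 1), z k ω) - x t) :
    Tendsto (fun t => ∫ ω, ‖e t ω‖ ^ 2 ∂P) atTop
      (nhds (γ * (1 - γ) ^ 2 * ‖xstar - x 0‖ ^ 2
        + (1 - γ) * ‖zinit - x 0 - (1 - γ) • (xstar - x 0)‖ ^ 2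
        + γ * (1 - γ) * Q)) := by
  classical
  set v : ℕ → EuclideanSpace ℝ (Fin n) :=
    fun k => match k with
      | 0 => zinit - x 0
      | (k + 1) => x k - x (k + 1) with hvdef
  have hv0 : v 0 = zinit - x 0 := rfl
  have hvs : ∀ k, v (k + 1) = x k - x (k + 1) := fun k => rfl
  -- pointwise representation of the error
  have hrep : ∀ t ω, e t ω
      = ∑ k ∈ Finset.range (t + 1), (if μ k ω then (0 : ℝ) else 1) • v k := by
    intro t ω
    induction t with
    | zero =>
        rw [he, Finset.sum_range_one, Finset.sum_range_one, hz0, hv0]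
        by_cases h : μ 0 ω <;> simp [h]
    | succ t ih =>
        have hstep : e (t + 1) ω = e t ω + (z (t + 1) ω - (x (t + 1) - x t)) := by
          rw [he, he, Finset.sum_range_succ]; abel
        rw [hstep, ih,
          Finset.sum_range_succ (fun k => (if μ k ω then (0 : ℝ) else 1) • v k) (t + 1)]
        congr 1
        rw [hz, hvs]
        by_cases h : μ (t + 1) ω <;> simp [h] <;> abel
  -- squared norm expansion
  have hnorm : ∀ t ω, ‖e t ω‖ ^ 2
      = ∑ j ∈ Finset.range (t + 1), ∑ k ∈ Finset.range (t + 1),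
          ((if μ j ω then (0 : ℝ) else 1) * (if μ k ω then (0 : ℝ) else 1))
            * (inner ℝ (v j) (v k) : ℝ) := by
    intro t ω
    rw [hrep, ← real_inner_self_eq_norm_sq, sum_inner]
    refine Finset.sum_congr rfl fun j _ => ?_
    rw [inner_sum]
    refine Finset.sum_congr rfl fun k _ => ?_
    rw [real_inner_smul_left, real_inner_smul_right]; ring
  -- measurability and probabilities
  have hA : ∀ j, MeasurableSet {ω | μ j ω = false} :=
    fun j => hmeas j (measurableSet_singleton false)
  have hPA : ∀ j, P {ω | μ j ω = false} = ENNReal.ofReal (1 - γ) := by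
    intro j
    have hset : {ω | μ j ω = false} = {ω | μ j ω = true}ᶜ := by
      ext ω; simp
    rw [hset, prob_compl_eq_one_sub
        (show MeasurableSet {ω | μ j ω = true} from hmeas j (measurableSet_singleton true)),
      hber, ← ENNReal.ofReal_one, ← ENNReal.ofReal_sub _ hγ0.le]
  have hPjk : ∀ j k, j ≠ k →
      P ({ω | μ j ω = false} ∩ {ω | μ k ω = false})
        = ENNReal.ofReal (1 - γ) * ENNReal.ofReal (1 - γ) := by
    intro j k hjk
    have h := (hindep.indepFun hjk).measure_inter_preimage_eq_mul
      (s := {false}) (t := {false}) (measurableSet_singleton _) (measurableSet_singleton _)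
    have hpre : ∀ i, μ i ⁻¹' {false} = {ω | μ i ω = false} := by
      intro i; ext ω; simp
    rw [hpre, hpre, hPA, hPA] at h
    rw [← h]
  have hS : ∀ j k, MeasurableSet ({ω | μ j ω = false} ∩ {ω | μ k ω = false}) :=
    fun j k => (hA j).inter (hA k)
  have hfun : ∀ j k (c : ℝ),
      (fun ω => ((if μ j ω then (0 : ℝ) else 1) * (if μ k ω then (0 : ℝ) else 1)) * c)
        = Set.indicator ({ω | μ j ω = false} ∩ {ω | μ k ω = false}) (fun _ => c) := by
    intro j k c; funext ω
    by_cases hj : μ j ω <;> by_cases hk : μ k ω <;>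
      simp [Set.indicator, hj, hk]
  have hintg : ∀ j k, Integrable (fun ω =>
      ((if μ j ω then (0 : ℝ) else 1) * (if μ k ω then (0 : ℝ) else 1))
        * (inner ℝ (v j) (v k) : ℝ)) P := by
    intro j k; rw [hfun]; exact (integrable_const _).indicator (hS j k)
  -- telescoping sums
  have htel : ∀ t, ∑ k ∈ Finset.range (t + 1), v k = zinit - x t := by
    intro t
    induction t with
    | zero => simpa using hv0
    | succ t ih => rw [Finset.sum_range_succ, ih, hvs]; abel
  have hR : ∀ t, ∑ k ∈ Finset.range (t + 1), ‖v k‖ ^ 2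
      = ‖zinit - x 0‖ ^ 2 + ∑ k ∈ Finset.range t, ‖x (k + 1) - x k‖ ^ 2 := by
    intro t
    rw [Finset.sum_range_succ', hv0, add_comm]
    congr 1
    refine Finset.sum_congr rfl fun k _ => ?_
    rw [hvs, norm_sub_rev]
  -- the exact value of the second moment
  have key : ∀ t, ∫ ω, ‖e t ω‖ ^ 2 ∂P
      = (1 - γ) ^ 2 * ‖zinit - x t‖ ^ 2
        + γ * (1 - γ) * (‖zinit - x 0‖ ^ 2
            + ∑ k ∈ Finset.range t, ‖x (k + 1) - x k‖ ^ 2) := by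
    intro t
    calc ∫ ω, ‖e t ω‖ ^ 2 ∂P
        = ∫ ω, ∑ j ∈ Finset.range (t + 1), ∑ k ∈ Finset.range (t + 1),
            ((if μ j ω then (0 : ℝ) else 1) * (if μ k ω then (0 : ℝ) else 1))
              * (inner ℝ (v j) (v k) : ℝ) ∂P := by
          congr 1; funext ω; exact hnorm t ω
      _ = ∑ j ∈ Finset.range (t + 1), ∑ k ∈ Finset.range (t + 1),
            (P ({ω | μ j ω = false} ∩ {ω | μ k ω = false})).toReal
              * (inner ℝ (v j) (v k) : ℝ) := by
          rw [integral_finset_sum _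
            (fun j _ => integrable_finset_sum _ (fun k _ => hintg j k))]
          refine Finset.sum_congr rfl fun j _ => ?_
          rw [integral_finset_sum _ (fun k _ => hintg j k)]
          refine Finset.sum_congr rfl fun k _ => ?_
          rw [hfun, integral_indicator_const _ (hS j k), smul_eq_mul, measureReal_def]
      _ = ∑ j ∈ Finset.range (t + 1), ∑ k ∈ Finset.range (t + 1),
            ((1 - γ) ^ 2 * (inner ℝ (v j) (v k) : ℝ)
              + if j = k then γ * (1 - γ) * (inner ℝ (v j) (v k) : ℝ) else 0) := by
          refine Finset.sum_congr rfl fun j _ => Finset.sum_congr rfl fun k _ => ?_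
          by_cases hjk : j = k
          · subst hjk
            rw [Set.inter_self, hPA, if_pos rfl, ENNReal.toReal_ofReal (by linarith)]
            ring
          · rw [hPjk j k hjk, if_neg hjk, ENNReal.toReal_mul,
              ENNReal.toReal_ofReal (by linarith)]
            ring
      _ = (1 - γ) ^ 2 * ‖zinit - x t‖ ^ 2
            + γ * (1 - γ) * (‖zinit - x 0‖ ^ 2
                + ∑ k ∈ Finset.range t, ‖x (k + 1) - x k‖ ^ 2) := by
          simp only [Finset.sum_add_distrib]
          congr 1
          · rw [← htel t, ← real_inner_self_eq_norm_sq, sum_inner]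
            rw [Finset.mul_sum]
            refine Finset.sum_congr rfl fun j _ => ?_
            rw [inner_sum, Finset.mul_sum]
          · rw [← hR t, Finset.mul_sum]
            refine Finset.sum_congr rfl fun j hj => ?_
            rw [Finset.sum_ite_eq (Finset.range (t + 1)) j
              (fun k => γ * (1 - γ) * (inner ℝ (v j) (v k) : ℝ)), if_pos hj,
              real_inner_self_eq_norm_sq]
  -- the limit
  have hlim : Tendsto (fun t => (1 - γ) ^ 2 * ‖zinit - x t‖ ^ 2
      + γ * (1 - γ) * (‖zinit - x 0‖ ^ 2
          + ∑ k ∈ Finset.range t, ‖x (k + 1) - x k‖ ^ 2)) atTop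
      (nhds ((1 - γ) ^ 2 * ‖zinit - xstar‖ ^ 2
        + γ * (1 - γ) * (‖zinit - x 0‖ ^ 2 + Q))) := by
    exact (((tendsto_const_nhds.sub hx).norm.pow 2).const_mul _).add
      ((hQ.tendsto_sum_nat.const_add _).const_mul _)
  have heq : (1 - γ) ^ 2 * ‖zinit - xstar‖ ^ 2
      + γ * (1 - γ) * (‖zinit - x 0‖ ^ 2 + Q)
      = γ * (1 - γ) ^ 2 * ‖xstar - x 0‖ ^ 2
        + (1 - γ) * ‖zinit - x 0 - (1 - γ) • (xstar - x 0)‖ ^ 2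
        + γ * (1 - γ) * Q := by
    set a := zinit - x 0 with ha
    set d := xstar - x 0 with hd
    have h1 : zinit - xstar = a - d := by rw [ha, hd]; abel
    rw [h1, norm_sub_sq_real a d, norm_sub_sq_real a ((1 - γ) • d),
      real_inner_smul_right, norm_smul, Real.norm_eq_abs, mul_pow, sq_abs]
    ring
  rw [heq] at hlim
  exact hlim.congr fun t => (key t).symm
end
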